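/- Let N ≥ 3 and f : Finset (Fin N) → ℝ. For each nonempty Q ⊆ Fin N define I_f(Q) := Σ_{P ⊆ Q, P ≠ ∅} (−1)^{|P|−1} f(P). Suppose (i) I_f(P) = 0 for every subset P with 3 ≤ |P| ≤ N−1, and (ii) I_f({i,j}) = 0 for every pair {i,j} that is not of the form {i, i+1 mod N}. Then I_f(Fin N) = (−1)^{N−1} [ Σ_{i=0}^{N−1} ( f({i}) − f({i, i+1 mod N}) ) + f(univ) ]. (For an annular arrangement of N subsystems, where all intermediate multipartite informations vanish except nearest-neighbour mutual informations, the N-partite information reduces to the nearest-neighbour expression, yielding the generalized strong subadditivity relation.) -/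

import Mathlib

/-- The multipartite information functional: for `f : Finset ι → ℝ` (the
entanglement entropy of the union of the subsystems indexed by a finite set)
and a finite index set `Q`, `I_f(Q) = Σ_{P ⊆ Q, P ≠ ∅} (-1)^(|P|-1) f(P)`. -/
def multiInfo {ι : Type*} [DecidableEq ι] (f : Finset ι → ℝ) (Q : Finset ι) : ℝ :=
  ∑ P ∈ Q.powerset.filter (· ≠ ∅), (-1 : ℝ) ^ (P.card - 1) * f P

open Finset

set_option linter.unusedSectionVars false


section Aux
variable {ι : Type*} [DecidableEq ι]

lemma sum_pow_real (x : Finset ι) :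
    (∑ m ∈ x.powerset, (-1 : ℝ) ^ m.card) = if x = ∅ then 1 else 0 := by
  have h := Finset.sum_powerset_neg_one_pow_card (x := x)
  have : ((∑ m ∈ x.powerset, (-1 : ℤ) ^ m.card : ℤ) : ℝ)
      = ∑ m ∈ x.powerset, (-1 : ℝ) ^ m.card := by push_cast; rfl
  rw [← this, h]; split <;> norm_num

/-- inner sum over supersets -/
lemma innerSumAux (Q R : Finset ι) (hR : R ⊆ Q) :
    ∑ P ∈ Q.powerset.filter (R ⊆ ·), (-1:ℝ)^P.card
      = if R = Q then (-1:ℝ)^R.card else 0 := by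
  have hbij : ∑ P ∈ Q.powerset.filter (R ⊆ ·), (-1:ℝ)^P.card
      = ∑ S ∈ (Q \ R).powerset, (-1:ℝ)^(S ∪ R).card := by
    refine Finset.sum_nbij' (fun P => P \ R) (fun S => S ∪ R) ?_ ?_ ?_ ?_ ?_
    · intro P hP
      simp only [mem_filter, mem_powerset] at hP ⊢
      exact sdiff_subset_sdiff hP.1 Subset.rfl
    · intro S hS
      simp only [mem_filter, mem_powerset] at hS ⊢
      constructor
      · exact union_subset (hS.trans (sdiff_subset)) hR
      · exact subset_union_right
    · intro P hP
      simp only [mem_filter, mem_powerset] at hP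
      exact sdiff_union_of_subset hP.2
    · intro S hS
      simp only [mem_powerset] at hS
      have hd : Disjoint S R := disjoint_of_subset_left hS sdiff_disjoint
      show (S ∪ R) \ R = S
      rw [union_sdiff_right]
      exact sdiff_eq_self_iff_disjoint.2 hd
    · intro P hP
      simp only [mem_filter, mem_powerset] at hP
      rw [sdiff_union_of_subset hP.2]
  rw [hbij]
  have : ∀ S ∈ (Q \ R).powerset, (-1:ℝ)^(S ∪ R).card = (-1:ℝ)^R.card * (-1:ℝ)^S.card := by
    intro S hS
    rw [mem_powerset] at hS
    have hd : Disjoint S R := disjoint_of_subset_left hS sdiff_disjoint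
    rw [card_union_of_disjoint hd, pow_add]; ring
  rw [Finset.sum_congr rfl this, ← Finset.mul_sum, sum_pow_real]
  by_cases h : R = Q
  · simp [h]
  · have h2 : Q \ R ≠ ∅ := by
      rw [Ne, sdiff_eq_empty_iff_subset]; exact fun hQR => h (hR.antisymm hQR)
    simp [h, h2]

/-- Möbius inversion on the Boolean lattice. -/
lemma mobius (g : Finset ι → ℝ) (Q : Finset ι) :
    ∑ P ∈ Q.powerset, (-1:ℝ)^P.card * ∑ R ∈ P.powerset, (-1:ℝ)^R.card * g R = g Q := by
  have : ∑ P ∈ Q.powerset, (-1:ℝ)^P.card * ∑ R ∈ P.powerset, (-1:ℝ)^R.card * g R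
      = ∑ P ∈ Q.powerset, ∑ R ∈ P.powerset, (-1:ℝ)^P.card * ((-1:ℝ)^R.card * g R) := by
    simp [Finset.mul_sum]
  rw [this]
  rw [Finset.sum_comm' (s' := fun R => Q.powerset.filter (R ⊆ ·)) (t' := Q.powerset)
    (by intro P R; simp only [mem_powerset, mem_filter]; constructor
        · rintro ⟨h1, h2⟩; exact ⟨⟨h1, h2⟩, h2.trans h1⟩
        · rintro ⟨⟨h1, h2⟩, h3⟩; exact ⟨h1, h2⟩)]
  have : ∀ R ∈ Q.powerset,
      (∑ P ∈ Q.powerset.filter (R ⊆ ·), (-1:ℝ)^P.card * ((-1:ℝ)^R.card * g R))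
      = (if R = Q then (-1:ℝ)^R.card else 0) * ((-1:ℝ)^R.card * g R) := by
    intro R hR
    rw [← Finset.sum_mul, innerSumAux Q R (mem_powerset.mp hR)]
  rw [Finset.sum_congr rfl this,
    Finset.sum_eq_single Q (fun b _ hb => by simp [hb]) (by simp)]
  simp [← pow_add, Even.neg_one_pow (n := Q.card + Q.card) ⟨Q.card, by ring⟩, ← mul_assoc]

end Aux

section Aux2
variable {ι : Type*} [DecidableEq ι]

lemma neg_pow_card {P : Finset ι} (hP : P ≠ ∅) :
    (-1:ℝ)^P.card = -(-1:ℝ)^(P.card - 1) := by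
  have h : P.card - 1 + 1 = P.card := Nat.succ_pred_eq_of_pos (Finset.card_pos.mpr
    (nonempty_iff_ne_empty.2 hP))
  calc (-1:ℝ)^P.card = (-1:ℝ)^(P.card-1+1) := by rw [h]
    _ = -(-1:ℝ)^(P.card-1) := by rw [pow_succ]; ring

lemma filter_eq_empty_powerset (Q : Finset ι) :
    Q.powerset.filter (fun P => ¬ P ≠ ∅) = {∅} := by
  ext R
  simp only [mem_filter, mem_powerset, mem_singleton, not_not]
  exact ⟨fun h => h.2, fun h => ⟨h ▸ empty_subset Q, h⟩⟩

lemma sum_powerset_split (f : Finset ι → ℝ) (Q : Finset ι) :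
    ∑ R ∈ Q.powerset, (-1:ℝ)^R.card * f R = f ∅ - multiInfo f Q := by
  rw [← Finset.sum_filter_add_sum_filter_not Q.powerset (· ≠ ∅),
    filter_eq_empty_powerset, sum_singleton]
  simp only [card_empty, pow_zero, one_mul]
  have : ∑ R ∈ Q.powerset.filter (· ≠ ∅), (-1:ℝ)^R.card * f R
      = ∑ R ∈ Q.powerset.filter (· ≠ ∅), -((-1:ℝ)^(R.card-1) * f R) := by
    refine Finset.sum_congr rfl fun R hR => ?_
    rw [neg_pow_card (mem_filter.mp hR).2]; ring
  rw [this, Finset.sum_neg_distrib]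
  unfold multiInfo
  ring

lemma multiInfo_empty (f : Finset ι → ℝ) : multiInfo f ∅ = 0 := by
  unfold multiInfo
  rw [powerset_empty]
  refine Finset.sum_eq_zero fun P hP => ?_
  simp only [mem_filter, mem_singleton] at hP
  exact absurd hP.1 hP.2

/-- Möbius inversion for multiInfo. -/
lemma f_eq_sum_multiInfo (f : Finset ι → ℝ) (Q : Finset ι) (hQ : Q ≠ ∅) :
    f Q = ∑ P ∈ Q.powerset.filter (· ≠ ∅), (-1:ℝ)^(P.card-1) * multiInfo f P := by
  conv_lhs => rw [← mobius f Q]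
  have h1 : ∀ P ∈ Q.powerset, (-1:ℝ)^P.card * (∑ R ∈ P.powerset, (-1:ℝ)^R.card * f R)
      = (-1:ℝ)^P.card * f ∅ - (-1:ℝ)^P.card * multiInfo f P := by
    intro P _; rw [sum_powerset_split]; ring
  rw [Finset.sum_congr rfl h1, Finset.sum_sub_distrib, ← Finset.sum_mul, sum_pow_real,
    if_neg hQ, zero_mul, zero_sub,
    ← Finset.sum_filter_add_sum_filter_not Q.powerset (· ≠ ∅), filter_eq_empty_powerset,
    sum_singleton, multiInfo_empty, mul_zero, add_zero]
  rw [← Finset.sum_neg_distrib]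
  refine Finset.sum_congr rfl fun P hP => ?_
  rw [neg_pow_card (mem_filter.mp hP).2]; ring

end Aux2

section Aux3
variable {ι : Type*} [DecidableEq ι]

lemma multiInfo_singleton (f : Finset ι → ℝ) (i : ι) : multiInfo f {i} = f {i} := by
  have hset : ({i} : Finset ι).powerset.filter (· ≠ ∅) = {{i}} := by
    ext R
    simp only [mem_filter, mem_powerset, Finset.subset_singleton_iff, mem_singleton]
    constructor
    · rintro ⟨h1 | h1, h2⟩ <;> simp_all
    · rintro rfl; exact ⟨Or.inr rfl, singleton_ne_empty i⟩
  unfold multiInfo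
  rw [hset, sum_singleton, card_singleton]
  norm_num

lemma subset_pair {i j : ι} {R : Finset ι} (h : R ⊆ {i, j}) :
    R = ∅ ∨ R = {i} ∨ R = {j} ∨ R = {i, j} := by
  by_cases hi : i ∈ R <;> by_cases hj : j ∈ R
  · refine Or.inr (Or.inr (Or.inr ?_))
    apply Finset.Subset.antisymm h
    intro x hx; simp only [mem_insert, mem_singleton] at hx
    rcases hx with rfl | rfl <;> assumption
  · refine Or.inr (Or.inl ?_)
    apply Finset.Subset.antisymm
    · intro x hx
      have := h hx
      simp only [mem_insert, mem_singleton] at this ⊢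
      rcases this with rfl | rfl
      · rfl
      · exact absurd hx hj
    · simp [hi]
  · refine Or.inr (Or.inr (Or.inl ?_))
    apply Finset.Subset.antisymm
    · intro x hx
      have := h hx
      simp only [mem_insert, mem_singleton] at this ⊢
      rcases this with rfl | rfl
      · exact absurd hx hi
      · rfl
    · simp [hj]
  · left
    rw [eq_empty_iff_forall_notMem]
    intro x hx
    have := h hx
    simp only [mem_insert, mem_singleton] at this
    rcases this with rfl | rfl
    · exact hi hx
    · exact hj hx

lemma multiInfo_pair (f : Finset ι → ℝ) {i j : ι} (hij : i ≠ j) :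
    multiInfo f {i, j} = f {i} + f {j} - f {i, j} := by
  have hset : ({i, j} : Finset ι).powerset.filter (· ≠ ∅)
      = {({i} : Finset ι), {j}, {i, j}} := by
    ext R
    simp only [mem_filter, mem_powerset, mem_insert, mem_singleton]
    constructor
    · rintro ⟨h1, h2⟩
      rcases subset_pair h1 with rfl | rfl | rfl | rfl
      · exact absurd rfl h2
      · exact Or.inl rfl
      · exact Or.inr (Or.inl rfl)
      · exact Or.inr (Or.inr rfl)
    · rintro (rfl | rfl | rfl)
      · exact ⟨by intro x hx; simp_all, singleton_ne_empty i⟩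
      · exact ⟨by intro x hx; simp_all, singleton_ne_empty j⟩
      · exact ⟨Finset.Subset.refl _, Finset.insert_ne_empty i {j}⟩
  have hne1 : ({i} : Finset ι) ∉ ({({j} : Finset ι), {i, j}} : Finset (Finset ι)) := by
    simp only [mem_insert, mem_singleton]
    push_neg
    constructor
    · exact fun h => hij (Finset.singleton_injective h)
    · intro h
      have := congrArg Finset.card h
      rw [card_singleton, card_pair hij] at this
      omega
  have hne2 : ({j} : Finset ι) ∉ ({({i, j} : Finset ι)} : Finset (Finset ι)) := by
    simp only [mem_singleton]
    intro h
    have := congrArg Finset.card h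
    rw [card_singleton, card_pair hij] at this
    omega
  unfold multiInfo
  rw [hset, Finset.sum_insert hne1, Finset.sum_insert hne2, sum_singleton,
    card_singleton, card_singleton, card_pair hij]
  norm_num
  ring

end Aux3

/-- For an annular arrangement of `N ≥ 3` subsystems, where all intermediate
multipartite informations vanish except the nearest-neighbour mutual
informations, the `N`-partite information reduces to the nearest-neighbour
expression:
`I_f(Fin N) = (-1)^(N-1) [ Σ_i (f({i}) - f({i, i+1 mod N})) + f(univ) ]`. -/
theorem multiInfo_annular_reduction (N : ℕ) (hN : 3 ≤ N) (f : Finset (Fin N) → ℝ)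
    (h3 : ∀ P : Finset (Fin N), 3 ≤ P.card → P.card ≤ N - 1 → multiInfo f P = 0)
    (h2 : ∀ i j : Fin N, i ≠ j →
      (∀ k : Fin N, ({i, j} : Finset (Fin N)) ≠ {k, k + (⟨1, by omega⟩ : Fin N)}) →
      multiInfo f {i, j} = 0) :
    multiInfo f (Finset.univ : Finset (Fin N))
      = (-1 : ℝ) ^ (N - 1) *
          ((∑ i : Fin N, (f {i} - f {i, i + (⟨1, by omega⟩ : Fin N)})) +
            f Finset.univ) := by
  set e : Fin N := ⟨1, by omega⟩ with he
  -- basic facts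
  have hval : ∀ k : Fin N, (k + e).val = (k.val + 1) % N := by
    intro k; rw [Fin.val_add]
  have hne : ∀ k : Fin N, k ≠ k + e := by
    intro k h
    have := congrArg Fin.val h
    rw [hval] at this
    have hk := k.isLt
    rcases Nat.lt_or_ge (k.val + 1) N with h' | h'
    · rw [Nat.mod_eq_of_lt h'] at this; omega
    · have hEq : k.val + 1 = N := by omega
      rw [hEq, Nat.mod_self] at this; omega
  have hinj : Function.Injective (fun k : Fin N => ({k, k + e} : Finset (Fin N))) := by
    intro k l h
    simp only at h
    have hk : k ∈ ({l, l + e} : Finset (Fin N)) := by rw [← h]; simp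
    have hl : l ∈ ({k, k + e} : Finset (Fin N)) := by rw [h]; simp
    simp only [mem_insert, mem_singleton] at hk hl
    rcases hk with rfl | hk
    · rfl
    rcases hl with rfl | hl
    · rfl
    -- k = l + e, l = k + e
    have h1 := congrArg Fin.val hk
    have h2 := congrArg Fin.val hl
    rw [hval] at h1 h2
    have hkl := k.isLt; have hll := l.isLt
    exfalso
    rcases Nat.lt_or_ge (l.val + 1) N with h' | h' <;>
      rcases Nat.lt_or_ge (k.val + 1) N with h'' | h''
    · rw [Nat.mod_eq_of_lt h'] at h1; rw [Nat.mod_eq_of_lt h''] at h2; omega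
    · rw [Nat.mod_eq_of_lt h'] at h1
      have : k.val + 1 = N := by omega
      rw [this, Nat.mod_self] at h2; omega
    · rw [Nat.mod_eq_of_lt h''] at h2
      have : l.val + 1 = N := by omega
      rw [this, Nat.mod_self] at h1; omega
    · have e2 : k.val + 1 = N := by omega
      rw [e2, Nat.mod_self] at h2
      have e1 : l.val + 1 = N := by omega
      rw [e1, Nat.mod_self] at h1
      omega
  have hNe : (Finset.univ : Finset (Fin N)) ≠ ∅ := by
    have : (⟨0, by omega⟩ : Fin N) ∈ (Finset.univ : Finset (Fin N)) := mem_univ _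
    intro h; rw [h] at this; exact notMem_empty _ this
  have hcardU : (Finset.univ : Finset (Fin N)).card = N := Finset.card_fin N
  have key := f_eq_sum_multiInfo f Finset.univ hNe
  set S : Finset (Finset (Fin N)) := Finset.univ.powerset.filter (· ≠ ∅) with hS
  set g : Finset (Fin N) → ℝ := fun P => (-1:ℝ)^(P.card-1) * multiInfo f P with hg
  -- split the sum
  rw [← Finset.sum_filter_add_sum_filter_not S (fun P => P.card = 1) g] at key
  rw [← Finset.sum_filter_add_sum_filter_not (S.filter (fun P => ¬ P.card = 1))
    (fun P => P.card = 2) g] at key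
  rw [← Finset.sum_filter_add_sum_filter_not ((S.filter (fun P => ¬ P.card = 1)).filter
    (fun P => ¬ P.card = 2)) (fun P => P.card = N) g] at key
  -- the leftover vanishes
  have hrest : ∑ P ∈ (((S.filter (fun P => ¬ P.card = 1)).filter
      (fun P => ¬ P.card = 2)).filter (fun P => ¬ P.card = N)), g P = 0 := by
    refine Finset.sum_eq_zero fun P hP => ?_
    simp only [mem_filter, hS, mem_powerset] at hP
    obtain ⟨⟨⟨⟨hPu, hPne⟩, hc1⟩, hc2⟩, hcN⟩ := hP
    have hpos : 1 ≤ P.card := Finset.card_pos.mpr (nonempty_iff_ne_empty.2 hPne)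
    have hle : P.card ≤ N := le_trans (Finset.card_le_card hPu) (le_of_eq hcardU)
    have := h3 P (by omega) (by omega)
    simp [hg, this]
  -- card = N part is {univ}
  have huniv : ((S.filter (fun P => ¬ P.card = 1)).filter (fun P => ¬ P.card = 2)).filter
      (fun P => P.card = N) = {Finset.univ} := by
    ext P
    simp only [mem_filter, hS, mem_powerset, mem_singleton]
    constructor
    · rintro ⟨⟨⟨⟨hPu, _⟩, _⟩, _⟩, hcN⟩
      exact Finset.eq_univ_of_card P (by rw [hcN, Fintype.card_fin])
    · rintro rfl
      refine ⟨⟨⟨⟨Finset.Subset.refl _, hNe⟩, by omega⟩, by omega⟩, hcardU⟩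
  -- card = 1 part
  have h1sum : ∑ P ∈ S.filter (fun P => P.card = 1), g P = ∑ i : Fin N, f {i} := by
    have himg : S.filter (fun P => P.card = 1)
        = Finset.univ.image (fun i : Fin N => ({i} : Finset (Fin N))) := by
      ext P
      simp only [mem_filter, hS, mem_powerset, mem_image, mem_univ, true_and]
      constructor
      · rintro ⟨⟨_, _⟩, hc⟩
        obtain ⟨i, rfl⟩ := Finset.card_eq_one.mp hc
        exact ⟨i, rfl⟩
      · rintro ⟨i, rfl⟩
        exact ⟨⟨subset_univ _, singleton_ne_empty i⟩, card_singleton i⟩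
    rw [himg, Finset.sum_image (fun a _ b _ h => Finset.singleton_injective h)]
    refine Finset.sum_congr rfl fun i _ => ?_
    rw [hg]
    simp [multiInfo_singleton]
  -- card = 2 part
  have h2sum : ∑ P ∈ (S.filter (fun P => ¬ P.card = 1)).filter (fun P => P.card = 2), g P
      = -(2 * (∑ i : Fin N, f {i}) - ∑ i : Fin N, f {i, i + e}) := by
    set T := (S.filter (fun P => ¬ P.card = 1)).filter (fun P => P.card = 2) with hT
    rw [← Finset.sum_filter_add_sum_filter_not T (fun P => ∃ k : Fin N, P = {k, k + e}) g]
    have hz : ∑ P ∈ T.filter (fun P => ¬ ∃ k : Fin N, P = {k, k + e}), g P = 0 := by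
      refine Finset.sum_eq_zero fun P hP => ?_
      simp only [mem_filter, hT, hS, mem_powerset] at hP
      obtain ⟨⟨⟨⟨_, _⟩, _⟩, hc2⟩, hnk⟩ := hP
      obtain ⟨i, j, hij, rfl⟩ := Finset.card_eq_two.mp hc2
      push_neg at hnk
      have h0 := h2 i j hij hnk
      simp [hg, h0]
    rw [hz, add_zero]
    have himg : T.filter (fun P => ∃ k : Fin N, P = {k, k + e})
        = Finset.univ.image (fun k : Fin N => ({k, k + e} : Finset (Fin N))) := by
      ext P
      simp only [mem_filter, hT, hS, mem_powerset, mem_image, mem_univ, true_and]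
      constructor
      · rintro ⟨_, k, rfl⟩; exact ⟨k, rfl⟩
      · rintro ⟨k, rfl⟩
        have hc := card_pair (hne k)
        exact ⟨⟨⟨⟨subset_univ _, Finset.insert_ne_empty _ _⟩, by omega⟩, hc⟩, k, rfl⟩
    rw [himg, Finset.sum_image (fun a _ b _ h => hinj h)]
    have hterm : ∀ k : Fin N, g {k, k + e} = -(f {k} + f {k + e} - f {k, k + e}) := by
      intro k
      simp only [hg, card_pair (hne k), multiInfo_pair f (hne k)]
      norm_num
    rw [Finset.sum_congr rfl fun k _ => hterm k]
    haveI : NeZero N := ⟨by omega⟩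
    have hshift : ∑ k : Fin N, f {k + e} = ∑ k : Fin N, f {k} :=
      Equiv.sum_comp (Equiv.addRight e) (fun k => f {k})
    rw [Finset.sum_neg_distrib]
    simp only [Finset.sum_sub_distrib, Finset.sum_add_distrib, hshift]
    ring
  rw [h1sum, h2sum, huniv, hrest, sum_singleton, add_zero] at key
  have hgu : g Finset.univ = (-1:ℝ)^(N-1) * multiInfo f Finset.univ := by
    simp only [hg, hcardU]
  rw [hgu] at key
  have hsq : (-1:ℝ)^(N-1) * (-1:ℝ)^(N-1) = 1 := by
    rw [← pow_add]; exact Even.neg_one_pow ⟨N-1, by ring⟩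
  have hsub : ∑ i : Fin N, (f {i} - f {i, i + e}) =
      (∑ i : Fin N, f {i}) - ∑ i : Fin N, f {i, i + e} := Finset.sum_sub_distrib _ _
  calc multiInfo f Finset.univ
      = ((-1:ℝ)^(N-1) * (-1:ℝ)^(N-1)) * multiInfo f Finset.univ := by rw [hsq, one_mul]
    _ = (-1:ℝ)^(N-1) * ((-1:ℝ)^(N-1) * multiInfo f Finset.univ) := by ring
    _ = (-1 : ℝ) ^ (N - 1) * ((∑ i : Fin N, (f {i} - f {i, i + e})) + f Finset.univ) := by
        rw [hsub]
        have : (-1:ℝ)^(N-1) * multiInfo f Finset.univ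
            = f Finset.univ + (∑ i : Fin N, f {i}) - ∑ i : Fin N, f {i, i + e} := by
          linarith [key]
        rw [this]; ring
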